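/- arXiv:2002.07153 — 6 statements merged into one kernel-verified Lean document; each statement's English description precedes it below -/
import Mathlib

section
/- The compatibility relation is not transitive in general: there exists a deterministic single-outputting p-filter F with states u, v, w such that u is compatible with v and v is compatible with w, but u is not compatible with w. -/
/-- A procrustean filter (p-filter): states `V`, a nonempty set of initial
states, observations `Y`, a transition function `tr : V → V → Set Y`,
an output space `C`, and an output function `out : V → Set C` mapping each
state to a nonempty set of outputs. -/
structure PFilter (V Y C : Type) where
  init : Set V
  init_nonempty : init.Nonempty
  tr : V → V → Set Y
  out : V → Set C
  out_nonempty : ∀ v, (out v).Nonempty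

namespace PFilter

variable {V V' Y C : Type}

/-- `F.Reaches v s u` : the observation string `s` reaches state `u` from `v`. -/
inductive Reaches (F : PFilter V Y C) : V → List Y → V → Prop
  | nil (v : V) : Reaches F v [] v
  | cons {v w u : V} {y : Y} {s : List Y} :
      y ∈ F.tr v w → Reaches F w s u → Reaches F v (y :: s) u

/-- The set of states reached by `s` when traced from state `v`. -/
def reachedFrom (F : PFilter V Y C) (v : V) (s : List Y) : Set V :=
  {u | F.Reaches v s u}

/-- The set of states reached by `s` from some initial state. -/
def reached (F : PFilter V Y C) (s : List Y) : Set V :=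
  {u | ∃ v0 ∈ F.init, F.Reaches v0 s u}

/-- The extensions of a state `v`: strings that do not crash from `v`. -/
def extensions (F : PFilter V Y C) (v : V) : Set (List Y) :=
  {s | ∃ u, F.Reaches v s u}

/-- The interaction language of `F`: extensions of initial states. -/
def language (F : PFilter V Y C) : Set (List Y) :=
  {s | ∃ v0 ∈ F.init, ∃ u, F.Reaches v0 s u}

/-- The filter output for string `s`: union of outputs of states reached by `s`. -/
def outputs (F : PFilter V Y C) (s : List Y) : Set C :=
  ⋃ v ∈ F.reached s, F.out v

/-- `F'` output simulates `F`. -/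
def OutputSimulates (F' : PFilter V' Y C) (F : PFilter V Y C) : Prop :=
  ∀ s ∈ F.language, (F'.outputs s).Nonempty ∧ F'.outputs s ⊆ F.outputs s

/-- `F` is deterministic: one initial state, and outgoing transition labels
from any state are pairwise disjoint. -/
def Deterministic (F : PFilter V Y C) : Prop :=
  (∃ v0, F.init = {v0}) ∧
    ∀ v1 v2 v3 : V, v2 ≠ v3 → F.tr v1 v2 ∩ F.tr v1 v3 = ∅

/-- `F` is single-outputting: every state's output set is a singleton. -/
def SingleOutputting (F : PFilter V Y C) : Prop :=
  ∀ v, ∃ o, F.out v = {o}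

/-- Two states are compatible: they agree on the outputs of all common extensions. -/
def Compatible (F : PFilter V Y C) (v w : V) : Prop :=
  ∀ s ∈ F.extensions v ∩ F.extensions w,
    ∀ v' ∈ F.reachedFrom v s, ∀ w' ∈ F.reachedFrom w s, F.out v' = F.out w'

/-- A set of mutually compatible states (a clique in the compatibility graph). -/
def MutuallyCompatible (F : PFilter V Y C) (U : Set V) : Prop :=
  ∀ v ∈ U, ∀ w ∈ U, F.Compatible v w

/-- A set of states is group compatible: there is a common output on
all their extensions. -/
def GroupCompatible (F : PFilter V Y C) (U : Set V) : Prop :=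
  ∀ s : List Y, (∃ u ∈ U, s ∈ F.extensions u) →
    (⋂ w ∈ {w | ∃ u ∈ U, w ∈ F.reachedFrom u s}, F.out w).Nonempty

/-- A state `v` of `F` corresponds to a state `v'` of `F'` if some string
reaches both from the respective initial states. -/
def Corresponds (F : PFilter V Y C) (F' : PFilter V' Y C) (v : V) (v' : V') : Prop :=
  ∃ s : List Y, v ∈ F.reached s ∧ v' ∈ F'.reached s

/-- `K_{v'}` : the set of states of `F` corresponding to a state `v'` of `F'`. -/
def corrSet (F : PFilter V Y C) (F' : PFilter V' Y C) (v' : V') : Set V :=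
  {v | Corresponds F F' v v'}

/-- The induced cover `Q(F,F') = {K_{v'} : v' ∈ V(F')}`. -/
def inducedCover (F : PFilter V Y C) (F' : PFilter V' Y C) : Set (Set V) :=
  Set.range (corrSet F F')

/-- The relation induced on `V(F)` by an output-simulating filter `F'`. -/
def inducedRel (F : PFilter V Y C) (F' : PFilter V' Y C) (v w : V) : Prop :=
  ∃ v' : V', Corresponds F F' v v' ∧ Corresponds F F' w v'

/-- `(U,W)_y` is a zipper constraint: `U` and `W` are sets of mutually
compatible states and `W` is the set of `y`-successors of `U`. -/
def ZipperConstraint (F : PFilter V Y C) (U W : Set V) (y : Y) : Prop :=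
  F.MutuallyCompatible U ∧ F.MutuallyCompatible W ∧
    W = {w | ∃ u ∈ U, y ∈ F.tr u w}

/-- A collection of sets `K` satisfies the zipper constraints of `F`. -/
def SatisfiesZip (F : PFilter V Y C) (K : Set (Set V)) : Prop :=
  ∀ U W y, F.ZipperConstraint U W y → (∃ S ∈ K, U ⊆ S) → ∃ T ∈ K, W ⊆ T

/-- `K` is a clique cover of the compatibility graph of `F` covering all vertices. -/
def IsCliqueCover (F : PFilter V Y C) (K : Set (Set V)) : Prop :=
  (∀ S ∈ K, F.MutuallyCompatible S) ∧ ⋃₀ K = Set.univ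

/-- `(U,W)_y` is a generalized zipper constraint: `U` and `W` are group
compatible and `W` is the set of `y`-successors of `U`. -/
def GenZipperConstraint (F : PFilter V Y C) (U W : Set V) (y : Y) : Prop :=
  F.GroupCompatible U ∧ F.GroupCompatible W ∧
    W = {w | ∃ u ∈ U, y ∈ F.tr u w}

/-- A collection of sets `K` satisfies the generalized zipper constraints of `F`. -/
def SatisfiesGenZip (F : PFilter V Y C) (K : Set (Set V)) : Prop :=
  ∀ U W y, F.GenZipperConstraint U W y → (∃ S ∈ K, U ⊆ S) → ∃ T ∈ K, W ⊆ T

/-- `K` is a cover of `V(F)` by group-compatible sets. -/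
def IsGroupCover (F : PFilter V Y C) (K : Set (Set V)) : Prop :=
  (∀ S ∈ K, F.GroupCompatible S) ∧ ⋃₀ K = Set.univ

/-- `F'` is an induced filter `M(F,K)`: one state per set of `K`; a state is
initial iff its set contains an initial state; output is the intersection of
the outputs over its set; transitions are inherited, and for each state and
observation only a single edge is kept, going to a set that contains all
successors under that observation. -/
def IsInducedFilter (F : PFilter V Y C) (K : Set (Set V))
    (F' : PFilter {S // S ∈ K} Y C) : Prop :=
  F'.init = {S : {S // S ∈ K} | ∃ v ∈ F.init, v ∈ S.1} ∧
  (∀ S, F'.out S = ⋂ v ∈ S.1, F.out v) ∧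
  (∀ S T (y : Y), y ∈ F'.tr S T → ∃ v ∈ S.1, ∃ w ∈ T.1, y ∈ F.tr v w) ∧
  (∀ S T (y : Y), y ∈ F'.tr S T → ∀ w, (∃ v ∈ S.1, y ∈ F.tr v w) → w ∈ T.1) ∧
  (∀ S (y : Y), (∃ v ∈ S.1, ∃ w, y ∈ F.tr v w) → ∃! T, y ∈ F'.tr S T)

/-- `F'` is the merged filter of `F` under cover `K` *without* the pruning
step: initial states are sets containing an initial state, outputs are the
common outputs of each set, and transitions are fully inherited. -/
def IsMergedFilter (F : PFilter V Y C) (K : Set (Set V))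
    (F' : PFilter {S // S ∈ K} Y C) : Prop :=
  F'.init = {S : {S // S ∈ K} | ∃ v ∈ F.init, v ∈ S.1} ∧
  (∀ S, F'.out S = ⋂ v ∈ S.1, F.out v) ∧
  (∀ S T, F'.tr S T = ⋃ v ∈ S.1, ⋃ w ∈ T.1, F.tr v w)

end PFilter

open PFilter in
/-- Counterexample filter: states 0,1,2 (u,v,w) and 3,4; edges 0→3 and 2→4. -/
def exF : PFilter (Fin 5) Unit Bool where
  init := {0}
  init_nonempty := ⟨0, rfl⟩
  tr := fun i j => {_y | (i = 0 ∧ j = 3) ∨ (i = 2 ∧ j = 4)}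
  out := fun v => if v = 4 then {true} else {false}
  out_nonempty := fun v => by by_cases h : v = 4 <;> simp [h]

open PFilter in
lemma reaches_nil {v u : Fin 5} (h : exF.Reaches v [] u) : v = u := by
  cases h; rfl

open PFilter in
lemma ext1_nil {s : List Unit} (h : s ∈ exF.extensions 1) : s = [] := by
  obtain ⟨u, hu⟩ := h
  cases hu with
  | nil => rfl
  | cons hy _ => simp [exF] at hy

/-- The compatibility relation is not transitive in general. -/
theorem compatible_not_transitive :
    ∃ (V Y C : Type) (_ : Finite V) (F : PFilter V Y C) (u v w : V),
      F.Deterministic ∧ F.SingleOutputting ∧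
      F.Compatible u v ∧ F.Compatible v w ∧ ¬ F.Compatible u w := by
  classical
  refine ⟨Fin 5, Unit, Bool, inferInstance, exF, 0, 1, 2, ?_, ?_, ?_, ?_, ?_⟩
  · refine ⟨⟨0, rfl⟩, fun v1 v2 v3 hne => ?_⟩
    ext y
    simp only [Set.mem_inter_iff, Set.mem_empty_iff_false, iff_false, not_and]
    intro h1 h2
    simp only [exF, Set.mem_setOf_eq] at h1 h2
    rcases h1 with ⟨h1a, h1b⟩ | ⟨h1a, h1b⟩ <;> rcases h2 with ⟨h2a, h2b⟩ | ⟨h2a, h2b⟩ <;>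
      first
      | exact hne (h1b.trans h2b.symm)
      | exact absurd (h1a.symm.trans h2a) (by decide)
  · intro v
    by_cases h : v = 4
    · exact ⟨true, by simp [exF, h]⟩
    · exact ⟨false, by simp [exF, h]⟩
  · intro s hs v' hv' w' hw'
    have h1 : s = [] := ext1_nil hs.2
    subst h1
    have e1 := reaches_nil hv'
    have e2 := reaches_nil hw'
    subst e1; subst e2
    simp [exF]
  · intro s hs v' hv' w' hw'
    have h1 : s = [] := ext1_nil hs.1
    subst h1
    have e1 := reaches_nil hv'
    have e2 := reaches_nil hw'
    subst e1; subst e2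
    simp [exF]
  · intro h
    have h0 : exF.Reaches 0 [()] 3 :=
      PFilter.Reaches.cons (by simp [exF]) (PFilter.Reaches.nil 3)
    have h2 : exF.Reaches 2 [()] 4 :=
      PFilter.Reaches.cons (by simp [exF]) (PFilter.Reaches.nil 4)
    have := h [()] ⟨⟨3, h0⟩, ⟨4, h2⟩⟩ 3 h0 4 h2
    simp [exF] at this
end

section
/- Let F and F' be deterministic p-filters with F single-outputting, and suppose F' output simulates F. Then for every state v' of F', any two states of F that correspond to v' are compatible; that is, each correspondence set K_{v'} is a clique in the compatibility graph of F. -/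
namespace PFilter

variable {V V' Y C : Type}

theorem reaches_append {F : PFilter V Y C} {v u x : V} {s1 s2 : List Y}
    (h1 : F.Reaches v s1 u) (h2 : F.Reaches u s2 x) :
    F.Reaches v (s1 ++ s2) x := by
  induction h1 with
  | nil => simpa using h2
  | cons hy _ ih => exact Reaches.cons hy (ih h2)

theorem reaches_append_split {F : PFilter V Y C} {v x : V} {s1 s2 : List Y}
    (h : F.Reaches v (s1 ++ s2) x) :
    ∃ u, F.Reaches v s1 u ∧ F.Reaches u s2 x := by
  induction s1 generalizing v with
  | nil => exact ⟨v, Reaches.nil v, by simpa using h⟩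
  | cons y t ih =>
    rcases h with _ | @⟨_, w, _, _, _, hy, h'⟩
    rcases ih h' with ⟨u, hu1, hu2⟩
    exact ⟨u, Reaches.cons hy hu1, hu2⟩

theorem det_unique {F : PFilter V Y C} (hdet : F.Deterministic) {v u1 u2 : V}
    {s : List Y} (h1 : F.Reaches v s u1) (h2 : F.Reaches v s u2) : u1 = u2 := by
  induction s generalizing v with
  | nil => cases h1; cases h2; rfl
  | cons y t ih =>
    rcases h1 with _ | @⟨_, w1, _, _, _, hy1, h1'⟩
    rcases h2 with _ | @⟨_, w2, _, _, _, hy2, h2'⟩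
    have hw : w1 = w2 := by
      by_contra hw
      have hd := hdet.2 v w1 w2 hw
      exact absurd (Set.mem_inter hy1 hy2) (by simp [hd])
    subst hw
    exact ih h1' h2'

end PFilter

/-- Each correspondence set is a clique in the compatibility
graph: any two states of `F` corresponding to a common state of `F'` are
compatible. -/
theorem corrSet_mutuallyCompatible {V V' Y C : Type} [Finite V] [Finite V']
    (F : PFilter V Y C) (F' : PFilter V' Y C)
    (hdet : F.Deterministic) (hdet' : F'.Deterministic)
    (hso : F.SingleOutputting) (hsim : F'.OutputSimulates F) (v' : V') :
    ∀ v ∈ PFilter.corrSet F F' v', ∀ w ∈ PFilter.corrSet F F' v',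
      F.Compatible v w := by
  obtain ⟨a0, ha0⟩ := hdet.1
  obtain ⟨b0, hb0⟩ := hdet'.1
  rintro v ⟨s1, ⟨av, hav, hrv⟩, ⟨bv, hbv, hrv'⟩⟩ w ⟨s2, ⟨aw, haw, hrw⟩, ⟨bw, hbw, hrw'⟩⟩
  rw [ha0, Set.mem_singleton_iff] at hav haw
  rw [hb0, Set.mem_singleton_iff] at hbv hbw
  rw [hav] at hrv; rw [haw] at hrw; rw [hbv] at hrv'; rw [hbw] at hrw'
  rintro s ⟨⟨v1, hv1⟩, ⟨w1, hw1⟩⟩ v2 hv2 w2 hw2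
  have hv2 : F.Reaches v s v2 := hv2
  have hw2 : F.Reaches w s w2 := hw2
  have hv12 : v1 = v2 := PFilter.det_unique hdet hv1 hv2
  subst hv12
  have hw12 : w1 = w2 := PFilter.det_unique hdet hw1 hw2
  subst hw12
  obtain ⟨o1, ho1⟩ := hso v1
  obtain ⟨o2, ho2⟩ := hso w1
  have hL1 : (s1 ++ s) ∈ F.language := ⟨a0, by simp [ha0], v1, PFilter.reaches_append hrv hv1⟩
  have hL2 : (s2 ++ s) ∈ F.language := ⟨a0, by simp [ha0], w1, PFilter.reaches_append hrw hw1⟩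
  obtain ⟨hne1, hsub1⟩ := hsim _ hL1
  obtain ⟨hne2, hsub2⟩ := hsim _ hL2
  have hFout1 : F.outputs (s1 ++ s) ⊆ {o1} := by
    rintro c hc
    simp only [PFilter.outputs, Set.mem_iUnion] at hc
    obtain ⟨u, ⟨a, ha, hra⟩, hcu⟩ := hc
    rw [ha0, Set.mem_singleton_iff] at ha
    rw [ha] at hra
    have : u = v1 := PFilter.det_unique hdet hra (PFilter.reaches_append hrv hv1)
    rw [this, ho1] at hcu
    exact hcu
  have hFout2 : F.outputs (s2 ++ s) ⊆ {o2} := by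
    rintro c hc
    simp only [PFilter.outputs, Set.mem_iUnion] at hc
    obtain ⟨u, ⟨a, ha, hra⟩, hcu⟩ := hc
    rw [ha0, Set.mem_singleton_iff] at ha
    rw [ha] at hra
    have : u = w1 := PFilter.det_unique hdet hra (PFilter.reaches_append hrw hw1)
    rw [this, ho2] at hcu
    exact hcu
  obtain ⟨c1, hc1⟩ := hne1
  simp only [PFilter.outputs, Set.mem_iUnion] at hc1
  obtain ⟨u1, ⟨b, hb, hrb⟩, hcu1⟩ := hc1
  rw [hb0, Set.mem_singleton_iff] at hb
  rw [hb] at hrb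
  obtain ⟨p, hp1, hp2⟩ := PFilter.reaches_append_split hrb
  have hpv' : p = v' := PFilter.det_unique hdet' hp1 hrv'
  rw [hpv'] at hp2
  obtain ⟨c2, hc2⟩ := hne2
  simp only [PFilter.outputs, Set.mem_iUnion] at hc2
  obtain ⟨u2, ⟨b2, hb2, hrb2⟩, hcu2⟩ := hc2
  rw [hb0, Set.mem_singleton_iff] at hb2
  rw [hb2] at hrb2
  obtain ⟨q, hq1, hq2⟩ := PFilter.reaches_append_split hrb2
  have hqv' : q = v' := PFilter.det_unique hdet' hq1 hrw'
  rw [hqv'] at hq2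
  have hu12 : u1 = u2 := PFilter.det_unique hdet' hp2 hq2
  subst hu12
  have ho1' : c1 = o1 := by
    have hmem : c1 ∈ F'.outputs (s1 ++ s) := by
      simp only [PFilter.outputs, Set.mem_iUnion]
      exact ⟨u1, ⟨b0, by simp [hb0], hrb⟩, hcu1⟩
    exact hFout1 (hsub1 hmem)
  have ho2' : c2 = o2 := by
    have hmem : c2 ∈ F'.outputs (s2 ++ s) := by
      simp only [PFilter.outputs, Set.mem_iUnion]
      exact ⟨u1, ⟨b0, by simp [hb0], hrb2⟩, hcu2⟩
    exact hFout2 (hsub2 hmem)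
  have hc12 : c1 = c2 := by
    have h1' : c1 ∈ F'.outputs (s2 ++ s) := by
      simp only [PFilter.outputs, Set.mem_iUnion]
      exact ⟨u1, ⟨b0, by simp [hb0], hrb2⟩, hcu1⟩
    have h2' := hFout2 (hsub2 h1')
    rw [Set.mem_singleton_iff] at h2'
    rw [h2', ho2']
  have ho12 : o1 = o2 := ho1' ▸ ho2' ▸ hc12
  rw [ho1, ho2, ho12]
end

section
/- Let F and F' be deterministic p-filters with F single-outputting, such that F' output simulates F. Then the induced clique cover Q(F,F') on the compatibility graph of F satisfies every zipper constraint in Zip(F). -/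
namespace PFilter

lemma reaches_snoc {V Y C : Type} {F : PFilter V Y C} {v u : V} {y : Y} {s : List Y} :
    F.Reaches v (s ++ [y]) u ↔ ∃ m, F.Reaches v s m ∧ y ∈ F.tr m u := by
  induction s generalizing v with
  | nil =>
    simp only [List.nil_append]
    constructor
    · intro h
      cases h with
      | cons hy h' => cases h'; exact ⟨v, .nil v, hy⟩
    · rintro ⟨m, hm, hy⟩
      cases hm
      exact .cons hy (.nil u)
  | cons a t ih =>
    constructor
    · intro h
      cases h with
      | cons hy h' =>
        obtain ⟨m, hm, hy2⟩ := ih.mp h'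
        exact ⟨m, .cons hy hm, hy2⟩
    · rintro ⟨m, hm, hy⟩
      cases hm with
      | cons ha hrest => exact .cons ha (ih.mpr ⟨m, hrest, hy⟩)

lemma det_tr_unique {V Y C : Type} {F : PFilter V Y C} (hdet : F.Deterministic)
    {v w w' : V} {y : Y} (h1 : y ∈ F.tr v w) (h2 : y ∈ F.tr v w') : w = w' := by
  by_contra hne
  have := hdet.2 v w w' hne
  exact absurd (Set.mem_inter h1 h2) (by simp [this])

lemma det_reaches_unique {V Y C : Type} {F : PFilter V Y C} (hdet : F.Deterministic)
    {v u1 u2 : V} {s : List Y} (h1 : F.Reaches v s u1) (h2 : F.Reaches v s u2) :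
    u1 = u2 := by
  induction h1 generalizing u2 with
  | nil v => cases h2; rfl
  | cons hy h ih =>
    cases h2 with
    | cons hy2 h2' =>
      obtain rfl := det_tr_unique hdet hy hy2
      exact ih h2'

end PFilter

/-- The induced clique cover `Q(F,F')` of an output-simulating
deterministic filter satisfies all zipper constraints of `F`. -/
theorem inducedCover_satisfiesZip {V V' Y C : Type} [Finite V] [Finite V']
    (F : PFilter V Y C) (F' : PFilter V' Y C)
    (hdet : F.Deterministic) (hdet' : F'.Deterministic)
    (hso : F.SingleOutputting) (hsim : F'.OutputSimulates F) :
    PFilter.SatisfiesZip F (PFilter.inducedCover F F') := by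
  classical
  obtain ⟨v0', hinit'⟩ := hdet'.1
  rintro U W y ⟨-, -, rfl⟩ ⟨S, ⟨v', rfl⟩, hUS⟩
  by_cases hW : {w | ∃ u ∈ U, y ∈ F.tr u w}.Nonempty
  · -- get a successor in F'
    obtain ⟨w0, u0, hu0U, hy0⟩ := hW
    -- generic claim: from any witnessing string/state pair we get a y-successor of v'
    have key : ∀ w u, u ∈ U → y ∈ F.tr u w → ∀ s, u ∈ F.reached s → v' ∈ F'.reached s →
        ∃ w2, y ∈ F'.tr v' w2 ∧ w ∈ F.reached (s ++ [y]) ∧ w2 ∈ F'.reached (s ++ [y]) := by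
      intro w u huU hyu s hus hvs
      obtain ⟨a0, ha0, hra0⟩ := hus
      obtain ⟨b0, hb0, hrb0⟩ := hvs
      rw [hinit', Set.mem_singleton_iff] at hb0
      have hwreach : w ∈ F.reached (s ++ [y]) :=
        ⟨a0, ha0, PFilter.reaches_snoc.mpr ⟨u, hra0, hyu⟩⟩
      have hlang : s ++ [y] ∈ F.language := ⟨a0, ha0, w, PFilter.reaches_snoc.mpr ⟨u, hra0, hyu⟩⟩
      obtain ⟨c, hc⟩ := (hsim _ hlang).1
      simp only [PFilter.outputs, Set.mem_iUnion] at hc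
      obtain ⟨w2, hw2, -⟩ := hc
      obtain ⟨b1, hb1, hrb1⟩ := hw2
      rw [hinit', Set.mem_singleton_iff] at hb1
      rw [hb1, ← hb0] at hrb1
      obtain ⟨m, hm, hym⟩ := PFilter.reaches_snoc.mp hrb1
      obtain rfl := PFilter.det_reaches_unique hdet' hm hrb0
      exact ⟨w2, hym, hwreach, ⟨b0, by rw [hinit', Set.mem_singleton_iff]; exact hb0, PFilter.reaches_snoc.mpr ⟨m, hm, hym⟩⟩⟩
    obtain ⟨s0, hu0r, hv'r⟩ := hUS hu0U
    obtain ⟨w', hyw', -, -⟩ := key w0 u0 hu0U hy0 s0 hu0r hv'r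
    refine ⟨PFilter.corrSet F F' w', ⟨w', rfl⟩, ?_⟩
    rintro w ⟨u, huU, hyu⟩
    obtain ⟨s, hur, hvr⟩ := hUS huU
    obtain ⟨w2, hyw2, hwreach, hw2reach⟩ := key w u huU hyu s hur hvr
    obtain rfl := PFilter.det_tr_unique hdet' hyw2 hyw'
    exact ⟨s ++ [y], hwreach, hw2reach⟩
  · refine ⟨PFilter.corrSet F F' v', ⟨v', rfl⟩, ?_⟩
    rw [Set.not_nonempty_iff_eq_empty] at hW
    rw [hW]
    exact Set.empty_subset _
end

section
/- Let F be a deterministic single-outputting p-filter in which every state is reachable from the initial state, and let F* be a deterministic p-filter that output simulates F and has the minimum number of states among all such filters. Then the induced clique cover Q(F,F*) is a clique cover of the compatibility graph G(F) that covers all vertices, satisfies Zip(F), and has minimum cardinality among all clique covers of G(F) that cover all vertices and satisfy Zip(F). -/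
namespace PFilter

variable {V V' Y C : Type}

theorem Reaches.append {F : PFilter V Y C} {v u q : V} {s t : List Y}
    (h1 : F.Reaches v s u) (h2 : F.Reaches u t q) : F.Reaches v (s ++ t) q := by
  induction h1 with
  | nil => simpa using h2
  | cons hy _ ih => exact Reaches.cons hy (ih h2)

theorem Reaches.append_split {F : PFilter V Y C} {v q : V} {s t : List Y}
    (h : F.Reaches v (s ++ t) q) : ∃ m, F.Reaches v s m ∧ F.Reaches m t q := by
  induction s generalizing v with
  | nil => exact ⟨v, Reaches.nil v, by simpa using h⟩
  | cons y s ih =>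
      rcases (by simpa using h : F.Reaches v (y :: (s ++ t)) q) with _ | @⟨_, w, _, _, _, hy, hr⟩
      rcases ih hr with ⟨m, hm1, hm2⟩
      exact ⟨m, Reaches.cons hy hm1, hm2⟩

theorem Reaches.single {F : PFilter V Y C} {v u : V} {y : Y}
    (h : y ∈ F.tr v u) : F.Reaches v [y] u :=
  Reaches.cons h (Reaches.nil u)

theorem Reaches.single_elim {F : PFilter V Y C} {v u : V} {y : Y}
    (h : F.Reaches v [y] u) : y ∈ F.tr v u := by
  rcases h with _ | @⟨_, w, _, _, _, hy, hr⟩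
  cases hr
  exact hy

theorem det_reached_subsingleton {F : PFilter V Y C} (hdet : F.Deterministic)
    (s : List Y) : (F.reached s).Subsingleton := by
  obtain ⟨v0, hv0⟩ := hdet.1
  rintro a ⟨va, hva, ha⟩ b ⟨vb, hvb, hb⟩
  rw [hv0] at hva hvb
  rcases hva with rfl; rcases hvb with rfl
  exact det_unique hdet ha hb

theorem outputs_nonempty_reached {F : PFilter V Y C} {s : List Y}
    (h : (F.outputs s).Nonempty) : (F.reached s).Nonempty := by
  rcases h with ⟨c, hc⟩
  simp only [outputs, Set.mem_iUnion] at hc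
  rcases hc with ⟨v, hv, _⟩
  exact ⟨v, hv⟩

/-- In a deterministic single-outputting filter, two states corresponding to the
same state of a deterministic output-simulating filter are compatible. -/
theorem corr_compatible {F : PFilter V Y C} {Fstar : PFilter V' Y C}
    (hdet : F.Deterministic) (hso : F.SingleOutputting) (hdstar : Fstar.Deterministic)
    (hsim : Fstar.OutputSimulates F) {v w : V} {v' : V'}
    (hv : Corresponds F Fstar v v') (hw : Corresponds F Fstar w v') :
    F.Compatible v w := by
  rcases hv with ⟨s1, hv1, hv1'⟩
  rcases hw with ⟨s2, hw2, hw2'⟩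
  intro s hs v'' hv'' w'' hw''
  rcases hv1 with ⟨a0, ha0, hva⟩
  rcases hw2 with ⟨b0, hb0, hwb⟩
  -- key claim: for a string t reaching x0 in F and v' in F*, and x reached from x0 by s,
  -- the unique F*-state reached from v' by s has nonempty output contained in F.out x.
  have key : ∀ (t : List Y) (x0 x : V), x0 ∈ F.reached t → v' ∈ Fstar.reached t →
      F.Reaches x0 s x → ∃ q : V', Fstar.Reaches v' s q ∧
        (Fstar.out q).Nonempty ∧ Fstar.out q ⊆ F.out x := by
    intro t x0 x hx0 hv't hxs
    rcases hx0 with ⟨i0, hi0, hti⟩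
    have hts : (t ++ s) ∈ F.language := ⟨i0, hi0, x, hti.append hxs⟩
    have hsimts := hsim _ hts
    obtain ⟨q, hq⟩ := outputs_nonempty_reached hsimts.1
    rcases hq with ⟨j0, hj0, hjts⟩
    rcases hjts.append_split with ⟨m, hm1, hm2⟩
    have hmv : m = v' := det_reached_subsingleton hdstar t ⟨j0, hj0, hm1⟩ hv't
    subst hmv
    refine ⟨q, hm2, Fstar.out_nonempty q, ?_⟩
    intro c hc
    have hcq : c ∈ Fstar.outputs (t ++ s) := by
      refine Set.mem_biUnion ?_ hc
      exact ⟨j0, hj0, hm1.append hm2⟩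
    have hcF : c ∈ F.outputs (t ++ s) := hsimts.2 hcq
    simp only [outputs, Set.mem_iUnion] at hcF
    rcases hcF with ⟨z, hzr, hcz⟩
    have hxr : x ∈ F.reached (t ++ s) := ⟨i0, hi0, hti.append hxs⟩
    have : z = x := det_reached_subsingleton hdet (t ++ s) hzr hxr
    subst this
    exact hcz
  obtain ⟨q1, hq1r, hq1ne, hq1sub⟩ := key s1 v v'' ⟨a0, ha0, hva⟩ hv1' hv''
  obtain ⟨q2, hq2r, hq2ne, hq2sub⟩ := key s2 w w'' ⟨b0, hb0, hwb⟩ hw2' hw''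
  have hqq : q1 = q2 := det_unique hdstar hq1r hq2r
  subst hqq
  obtain ⟨o1, ho1⟩ := hso v''
  obtain ⟨o2, ho2⟩ := hso w''
  obtain ⟨c, hc⟩ := hq1ne
  have h1 : c ∈ F.out v'' := hq1sub hc
  have h2 : c ∈ F.out w'' := hq2sub hc
  rw [ho1] at h1 ⊢; rw [ho2] at h2 ⊢
  rcases h1 with rfl; rcases h2 with rfl
  rfl

/-- all states in a mutually compatible set have equal output. -/
theorem mc_out_eq {F : PFilter V Y C} {S : Set V} (hS : F.MutuallyCompatible S)
    {v w : V} (hv : v ∈ S) (hw : w ∈ S) : F.out v = F.out w :=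
  hS v hv w hw [] ⟨⟨v, Reaches.nil v⟩, ⟨w, Reaches.nil w⟩⟩ v (Reaches.nil v) w (Reaches.nil w)

/-- successors of a mutually compatible set are mutually compatible. -/
theorem mc_succ {F : PFilter V Y C} {S : Set V} (hS : F.MutuallyCompatible S) (y : Y) :
    F.MutuallyCompatible {w | ∃ u ∈ S, y ∈ F.tr u w} := by
  rintro w1 ⟨u1, hu1, hy1⟩ w2 ⟨u2, hu2, hy2⟩ s ⟨⟨a, ha⟩, ⟨b, hb⟩⟩ p hp q hq
  exact hS u1 hu1 u2 hu2 (y :: s)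
    ⟨⟨a, Reaches.cons hy1 ha⟩, ⟨b, Reaches.cons hy2 hb⟩⟩
    p (Reaches.cons hy1 hp) q (Reaches.cons hy2 hq)

end PFilter

namespace PFilter

/-- From a clique cover satisfying the zipper constraints one can build a
deterministic filter on the cover that output simulates `F`. -/
theorem exists_det_sim {V Y C : Type} (F : PFilter V Y C) (hdet : F.Deterministic)
    (K' : Set (Set V)) (hcc : F.IsCliqueCover K') (hzip : F.SatisfiesZip K') :
    ∃ F'' : PFilter {S // S ∈ K'} Y C, F''.Deterministic ∧ F''.OutputSimulates F := by
  classical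
  obtain ⟨v0, hv0⟩ := hdet.1
  have hchoice : ∀ (S : {S // S ∈ K'}) (y : Y), ∃ T : {S // S ∈ K'},
      {w | ∃ u ∈ S.1, y ∈ F.tr u w} ⊆ T.1 := by
    intro S y
    obtain ⟨T, hT, hsub⟩ := hzip S.1 _ y
      ⟨hcc.1 S.1 S.2, mc_succ (hcc.1 S.1 S.2) y, rfl⟩ ⟨S.1, S.2, subset_rfl⟩
    exact ⟨⟨T, hT⟩, hsub⟩
  choose f hf using hchoice
  have hv0u : v0 ∈ ⋃₀ K' := hcc.2 ▸ Set.mem_univ v0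
  obtain ⟨S0, hS0, hv0S0⟩ := hv0u
  refine ⟨{ init := {⟨S0, hS0⟩},
            init_nonempty := ⟨_, rfl⟩,
            tr := fun S T => {y | T = f S y},
            out := fun S => F.out (if h : S.1.Nonempty then h.choose else v0),
            out_nonempty := fun S => F.out_nonempty _ }, ?_, ?_⟩
  · refine ⟨⟨⟨S0, hS0⟩, rfl⟩, ?_⟩
    intro S T1 T2 hne
    apply Set.eq_empty_iff_forall_notMem.2
    rintro y ⟨h1, h2⟩
    exact hne ((show T1 = f S y from h1).trans (show T2 = f S y from h2).symm)
  · set F'' : PFilter {S // S ∈ K'} Y C :=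
      { init := {⟨S0, hS0⟩},
        init_nonempty := ⟨_, rfl⟩,
        tr := fun S T => {y | T = f S y},
        out := fun S => F.out (if h : S.1.Nonempty then h.choose else v0),
        out_nonempty := fun S => F.out_nonempty _ } with hF''
    have hdet'' : F''.Deterministic := by
      refine ⟨⟨⟨S0, hS0⟩, rfl⟩, ?_⟩
      intro S T1 T2 hne
      apply Set.eq_empty_iff_forall_notMem.2
      rintro y ⟨h1, h2⟩
      exact hne ((show T1 = f S y from h1).trans (show T2 = f S y from h2).symm)
    have inv : ∀ {v : V} {s : List Y} {u : V}, F.Reaches v s u →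
        ∀ S : {S // S ∈ K'}, v ∈ S.1 → ∃ T, F''.Reaches S s T ∧ u ∈ T.1 := by
      intro v s u h
      induction h with
      | nil v => exact fun S hS => ⟨S, Reaches.nil S, hS⟩
      | @cons v w u y s hy hr ih =>
          intro S hS
          obtain ⟨T, hT, hu⟩ := ih (f S y) (hf S y ⟨v, hS, hy⟩)
          exact ⟨T, Reaches.cons (show y ∈ F''.tr S (f S y) from rfl) hT, hu⟩
    intro s hs
    obtain ⟨i0, hi0, u, hr⟩ := hs
    rw [hv0, Set.mem_singleton_iff] at hi0
    rw [hi0] at hr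
    obtain ⟨T, hT, hu⟩ := inv hr ⟨S0, hS0⟩ hv0S0
    have hTr : T ∈ F''.reached s := ⟨⟨S0, hS0⟩, rfl, hT⟩
    have hTne : T.1.Nonempty := ⟨u, hu⟩
    have houtT : F''.out T = F.out u := by
      show F.out (if h : T.1.Nonempty then h.choose else v0) = F.out u
      rw [dif_pos hTne]
      exact mc_out_eq (hcc.1 T.1 T.2) hTne.choose_spec hu
    have huF : u ∈ F.reached s := ⟨v0, by rw [hv0]; rfl, hr⟩
    constructor
    · obtain ⟨c, hc⟩ := F.out_nonempty u
      exact ⟨c, Set.mem_biUnion hTr (houtT ▸ hc)⟩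
    · intro c hc
      simp only [outputs, Set.mem_iUnion] at hc
      obtain ⟨T', hT', hcT'⟩ := hc
      have : T' = T := det_reached_subsingleton hdet'' s hT' hTr
      subst this
      exact Set.mem_biUnion huF (houtT ▸ hcT')

end PFilter

/-- A minimal deterministic output-simulating filter induces a
minimum clique cover satisfying the zipper constraints. -/
theorem minimal_filter_induces_minimal_cover {V V' Y C : Type} [Finite V] [Finite V']
    (F : PFilter V Y C) (hdet : F.Deterministic) (hso : F.SingleOutputting)
    (hreach : ∀ v : V, ∃ s : List Y, v ∈ F.reached s)
    (Fstar : PFilter V' Y C) (hdstar : Fstar.Deterministic)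
    (hsim : Fstar.OutputSimulates F)
    (hmin : ∀ (V'' : Type) (_ : Finite V'') (F'' : PFilter V'' Y C),
      F''.Deterministic → F''.OutputSimulates F → Nat.card V' ≤ Nat.card V'') :
    PFilter.IsCliqueCover F (PFilter.inducedCover F Fstar) ∧
    PFilter.SatisfiesZip F (PFilter.inducedCover F Fstar) ∧
    ∀ K' : Set (Set V), PFilter.IsCliqueCover F K' → PFilter.SatisfiesZip F K' →
      (PFilter.inducedCover F Fstar).ncard ≤ K'.ncard := by
  classical
  obtain ⟨v0star, hv0star⟩ := hdstar.1
  have hcorrMC : ∀ v' : V', F.MutuallyCompatible (PFilter.corrSet F Fstar v') := by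
    intro v' v hv w hw
    exact PFilter.corr_compatible hdet hso hdstar hsim hv hw
  refine ⟨⟨?_, ?_⟩, ?_, ?_⟩
  · rintro S ⟨v', rfl⟩
    exact hcorrMC v'
  · apply Set.eq_univ_iff_forall.2
    intro v
    obtain ⟨s, hv⟩ := hreach v
    obtain ⟨i0, hi0, hr⟩ := hv
    have hls : s ∈ F.language := ⟨i0, hi0, v, hr⟩
    obtain ⟨v', hv'⟩ := PFilter.outputs_nonempty_reached (hsim s hls).1
    exact ⟨PFilter.corrSet F Fstar v', ⟨v', rfl⟩, ⟨s, ⟨i0, hi0, hr⟩, hv'⟩⟩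
  · rintro U W y ⟨hU, hW, hWeq⟩ ⟨S, ⟨v', rfl⟩, hUS⟩
    by_cases hWne : W.Nonempty
    · obtain ⟨w0, hw0⟩ := hWne
      rw [hWeq] at hw0
      obtain ⟨u0, hu0, hy0⟩ := hw0
      obtain ⟨s0, hu0F, hv'F⟩ := hUS hu0
      obtain ⟨i0, hi0, hr0⟩ := hu0F
      have hls : (s0 ++ [y]) ∈ F.language :=
        ⟨i0, hi0, w0, hr0.append (PFilter.Reaches.single hy0)⟩
      obtain ⟨q, hq⟩ := PFilter.outputs_nonempty_reached (hsim _ hls).1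
      obtain ⟨j0, hj0, hjr⟩ := hq
      obtain ⟨m, hm1, hm2⟩ := hjr.append_split
      have hmv : m = v' := PFilter.det_reached_subsingleton hdstar s0 ⟨j0, hj0, hm1⟩ hv'F
      subst hmv
      have hyq : y ∈ Fstar.tr m q := hm2.single_elim
      refine ⟨PFilter.corrSet F Fstar q, ⟨q, rfl⟩, ?_⟩
      intro w hw
      rw [hWeq] at hw
      obtain ⟨u, hu, hyw⟩ := hw
      obtain ⟨s, huF, hv's⟩ := hUS hu
      obtain ⟨a0, ha0, har⟩ := huF
      obtain ⟨b0, hb0, hbr⟩ := hv's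
      exact ⟨s ++ [y], ⟨a0, ha0, har.append (PFilter.Reaches.single hyw)⟩,
        ⟨b0, hb0, hbr.append (PFilter.Reaches.single hyq)⟩⟩
    · rw [Set.not_nonempty_iff_eq_empty] at hWne
      subst hWne
      exact ⟨PFilter.corrSet F Fstar v', ⟨v', rfl⟩, Set.empty_subset _⟩
  · intro K' hcc hzip
    obtain ⟨F'', hdet'', hsim''⟩ := PFilter.exists_det_sim F hdet K' hcc hzip
    have hfin : Finite {S // S ∈ K'} := inferInstance
    have h1 : Nat.card V' ≤ Nat.card {S // S ∈ K'} :=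
      hmin _ hfin F'' hdet'' hsim''
    have h2 : (PFilter.inducedCover F Fstar).ncard ≤ Nat.card V' := by
      rw [← Nat.card_coe_set_eq]
      exact Nat.card_le_card_of_surjective _
        (Set.rangeFactorization_surjective (f := PFilter.corrSet F Fstar))
    have h3 : Nat.card {S // S ∈ K'} = K'.ncard := Nat.card_coe_set_eq K'
    omega
end

section
/- Merging compatible states need not preserve determinism or output simulation: there exists a deterministic single-outputting p-filter F and a clique cover K of its compatibility graph covering all states such that the merged filter — whose states are the cliques of K, whose initial states are the cliques containing the initial state, whose outputs are the common outputs of each clique, and whose transitions are inherited as τ'(v',w') = ∪_{v ∈ K_{v'}, w ∈ K_{w'}} τ(v,w) — is non-deterministic and does not output simulate F. -/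
namespace MergeCounterexample

/-- deterministic step function of the example filter -/
def δ : Fin 7 → Fin 2 → Option (Fin 7)
  | 0, 0 => some 2
  | 1, 0 => some 3
  | 2, 1 => some 5
  | 4, 1 => some 6
  | _, _ => none

def Fout (v : Fin 7) : Set (Fin 2) := if v = 6 then {1} else {0}

def F : PFilter (Fin 7) (Fin 2) (Fin 2) where
  init := {0}
  init_nonempty := ⟨0, rfl⟩
  tr := fun a b => {y | δ a y = some b}
  out := Fout
  out_nonempty := by
    intro v
    unfold Fout
    split
    · exact ⟨1, rfl⟩
    · exact ⟨0, rfl⟩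

def run : Fin 7 → List (Fin 2) → Option (Fin 7)
  | v, [] => some v
  | v, y :: s => match δ v y with
    | none => none
    | some w => run w s

lemma run_char (s : List (Fin 2)) : ∀ v u : Fin 7, F.Reaches v s u ↔ run v s = some u := by
  induction s with
  | nil =>
    intro v u
    constructor
    · rintro h
      cases h
      rfl
    · rintro h
      simp only [run, Option.some.injEq] at h
      subst h
      exact PFilter.Reaches.nil v
  | cons y t ih =>
    intro v u
    constructor
    · rintro h
      cases h with
      | cons hy hr =>
        rename_i w
        have : δ v y = some w := hy
        simp only [run, this]
        exact (ih _ _).mp hr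
    · intro h
      simp only [run] at h
      rcases hd : δ v y with _ | w
      · rw [hd] at h; exact absurd h (by simp)
      · rw [hd] at h
        exact PFilter.Reaches.cons (show y ∈ F.tr v _ from hd) ((ih _ _).mpr h)

lemma compat_of_run (a b : Fin 7)
    (h : ∀ s : List (Fin 2), ∀ v' w' : Fin 7,
        run a s = some v' → run b s = some w' → Fout v' = Fout w') :
    F.Compatible a b := by
  intro s _ v' hv w' hw
  exact h s v' w' ((run_char s a v').mp hv) ((run_char s b w').mp hw)

lemma compat_self (a : Fin 7) : F.Compatible a a := by
  apply compat_of_run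
  intro s v' w' h1 h2
  rw [h1] at h2
  cases h2
  rfl

-- runs from 1 : [] → 1, [0] → 3, else none
lemma run_one (s : List (Fin 2)) (u : Fin 7) (h : run 1 s = some u) :
    (s = [] ∧ u = 1) ∨ (s = [0] ∧ u = 3) := by
  match s with
  | [] => left; simp only [run, Option.some.injEq] at h; exact ⟨rfl, h.symm⟩
  | y :: t =>
    right
    fin_cases y
    · -- δ 1 0 = some 3
      simp only [run, δ] at h
      match t with
      | [] => simp only [run, Option.some.injEq] at h; exact ⟨rfl, by revert h; revert u; decide⟩
      | z :: t' =>
        exfalso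
        fin_cases z <;> simp [run, δ] at h
    · simp [run, δ] at h

lemma run_three (s : List (Fin 2)) (u : Fin 7) (h : run 3 s = some u) :
    s = [] ∧ u = 3 := by
  match s with
  | [] => simp only [run, Option.some.injEq] at h; exact ⟨rfl, h.symm⟩
  | y :: t => exfalso; fin_cases y <;> simp [run, δ] at h

lemma compat01 : F.Compatible 0 1 := by
  apply compat_of_run
  intro s v' w' h0 h1
  rcases run_one s w' h1 with ⟨rfl, rfl⟩ | ⟨rfl, rfl⟩
  · simp only [run, Option.some.injEq] at h0; subst h0; rfl
  · simp only [run, δ, Option.some.injEq] at h0; subst h0; rfl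

lemma compat10 : F.Compatible 1 0 := by
  apply compat_of_run
  intro s v' w' h1 h0
  rcases run_one s v' h1 with ⟨rfl, rfl⟩ | ⟨rfl, rfl⟩
  · simp only [run, Option.some.injEq] at h0; subst h0; rfl
  · simp only [run, δ, Option.some.injEq] at h0; subst h0; rfl

lemma compat34 : F.Compatible 3 4 := by
  apply compat_of_run
  intro s v' w' h3 h4
  rcases run_three s v' h3 with ⟨rfl, rfl⟩
  simp only [run, Option.some.injEq] at h4; subst h4; rfl

lemma compat43 : F.Compatible 4 3 := by
  apply compat_of_run
  intro s v' w' h4 h3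
  rcases run_three s w' h3 with ⟨rfl, rfl⟩
  simp only [run, Option.some.injEq] at h4; subst h4; rfl

def K : Set (Set (Fin 7)) := {{0, 1}, {3, 4}, {2}, {5}, {6}}

def F' : PFilter {S // S ∈ K} (Fin 2) (Fin 2) where
  init := {S : {S // S ∈ K} | ∃ v ∈ F.init, v ∈ S.1}
  init_nonempty := by
    refine ⟨⟨{0, 1}, Or.inl rfl⟩, 0, rfl, Or.inl rfl⟩
  tr := fun S T => ⋃ v ∈ S.1, ⋃ w ∈ T.1, F.tr v w
  out := fun S => ⋂ v ∈ S.1, F.out v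
  out_nonempty := by
    rintro ⟨S, hS⟩
    rcases hS with rfl | rfl | rfl | rfl | rfl
    · refine ⟨0, ?_⟩
      simp only [Set.mem_iInter]
      rintro v (rfl | rfl) <;> exact rfl
    · refine ⟨0, ?_⟩
      simp only [Set.mem_iInter]
      rintro v (rfl | rfl) <;> exact rfl
    · exact ⟨0, by simp only [Set.mem_iInter]; rintro v rfl; exact rfl⟩
    · exact ⟨0, by simp only [Set.mem_iInter]; rintro v rfl; exact rfl⟩
    · exact ⟨1, by simp only [Set.mem_iInter]; rintro v rfl; exact rfl⟩

end MergeCounterexample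

/-- Merging compatible states need not preserve determinism or
output simulation. -/
theorem merging_may_break_determinism :
    ∃ (V Y C : Type) (_ : Finite V) (F : PFilter V Y C) (K : Set (Set V))
      (F' : PFilter {S // S ∈ K} Y C),
      F.Deterministic ∧ F.SingleOutputting ∧ PFilter.IsCliqueCover F K ∧
      PFilter.IsMergedFilter F K F' ∧
      ¬ F'.Deterministic ∧ ¬ F'.OutputSimulates F := by
  classical
  open MergeCounterexample in
  refine ⟨Fin 7, Fin 2, Fin 2, inferInstance, F, K, F', ?_, ?_, ?_, ?_, ?_, ?_⟩
  · -- Deterministic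
    refine ⟨⟨0, rfl⟩, ?_⟩
    intro v1 v2 v3 hne
    rw [Set.eq_empty_iff_forall_notMem]
    rintro y ⟨h2, h3⟩
    have e2 : δ v1 y = some v2 := h2
    have e3 : δ v1 y = some v3 := h3
    rw [e2] at e3
    exact hne (Option.some.inj e3)
  · -- SingleOutputting
    intro v
    by_cases hv : v = 6
    · exact ⟨1, by simp [F, Fout, hv]⟩
    · exact ⟨0, by simp [F, Fout, hv]⟩
  · -- IsCliqueCover
    constructor
    · rintro S (rfl | rfl | rfl | rfl | rfl)
      · rintro v (rfl | rfl) w (rfl | rfl)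
        exacts [compat_self 0, compat01, compat10, compat_self 1]
      · rintro v (rfl | rfl) w (rfl | rfl)
        exacts [compat_self 3, compat34, compat43, compat_self 4]
      · rintro v rfl w rfl; exact compat_self 2
      · rintro v rfl w rfl; exact compat_self 5
      · rintro v rfl w rfl; exact compat_self 6
    · refine Set.eq_univ_of_forall fun v => ?_
      fin_cases v
      · exact ⟨{0, 1}, Or.inl rfl, Or.inl rfl⟩
      · exact ⟨{0, 1}, Or.inl rfl, Or.inr rfl⟩
      · exact ⟨{2}, Or.inr (Or.inr (Or.inl rfl)), rfl⟩
      · exact ⟨{3, 4}, Or.inr (Or.inl rfl), Or.inl rfl⟩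
      · exact ⟨{3, 4}, Or.inr (Or.inl rfl), Or.inr rfl⟩
      · exact ⟨{5}, Or.inr (Or.inr (Or.inr (Or.inl rfl))), rfl⟩
      · exact ⟨{6}, Or.inr (Or.inr (Or.inr (Or.inr rfl))), rfl⟩
  · -- IsMergedFilter
    exact ⟨rfl, fun _ => rfl, fun _ _ => rfl⟩
  · -- ¬ Deterministic
    rintro ⟨-, hdis⟩
    set S0 : {S // S ∈ K} := ⟨{0, 1}, Or.inl rfl⟩
    set Sp : {S // S ∈ K} := ⟨{2}, Or.inr (Or.inr (Or.inl rfl))⟩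
    set Sw : {S // S ∈ K} := ⟨{3, 4}, Or.inr (Or.inl rfl)⟩
    have hne : Sp ≠ Sw := by
      intro h
      have heq : ({2} : Set (Fin 7)) = {3, 4} := Subtype.ext_iff.mp h
      have h2 : (2 : Fin 7) ∈ ({3, 4} : Set (Fin 7)) := by
        rw [← heq]; exact rfl
      rcases h2 with h2 | h2 <;> exact absurd h2 (by decide)
    have h1 : (0 : Fin 2) ∈ F'.tr S0 Sp :=
      Set.mem_biUnion (Or.inl rfl : (0:Fin 7) ∈ ({0,1} : Set (Fin 7)))
        (Set.mem_biUnion (rfl : (2:Fin 7) ∈ ({2} : Set (Fin 7)))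
          (show δ 0 0 = some 2 from rfl))
    have h2 : (0 : Fin 2) ∈ F'.tr S0 Sw :=
      Set.mem_biUnion (Or.inr rfl : (1:Fin 7) ∈ ({0,1} : Set (Fin 7)))
        (Set.mem_biUnion (Or.inl rfl : (3:Fin 7) ∈ ({3,4} : Set (Fin 7)))
          (show δ 1 0 = some 3 from rfl))
    have := hdis S0 Sp Sw hne
    rw [Set.eq_empty_iff_forall_notMem] at this
    exact this 0 ⟨h1, h2⟩
  · -- ¬ OutputSimulates
    intro hsim
    have hlang : [0, 1] ∈ F.language :=
      ⟨0, rfl, 5, (run_char [0, 1] 0 5).mpr rfl⟩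
    obtain ⟨-, hsub⟩ := hsim _ hlang
    set S0 : {S // S ∈ K} := ⟨{0, 1}, Or.inl rfl⟩
    set Sw : {S // S ∈ K} := ⟨{3, 4}, Or.inr (Or.inl rfl)⟩
    set S6 : {S // S ∈ K} := ⟨{6}, Or.inr (Or.inr (Or.inr (Or.inr rfl)))⟩
    have hstep1 : (0 : Fin 2) ∈ F'.tr S0 Sw :=
      Set.mem_biUnion (Or.inr rfl : (1:Fin 7) ∈ ({0,1} : Set (Fin 7)))
        (Set.mem_biUnion (Or.inl rfl : (3:Fin 7) ∈ ({3,4} : Set (Fin 7)))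
          (show δ 1 0 = some 3 from rfl))
    have hstep2 : (1 : Fin 2) ∈ F'.tr Sw S6 :=
      Set.mem_biUnion (Or.inr rfl : (4:Fin 7) ∈ ({3,4} : Set (Fin 7)))
        (Set.mem_biUnion (rfl : (6:Fin 7) ∈ ({6} : Set (Fin 7)))
          (show δ 4 1 = some 6 from rfl))
    have hreach : S6 ∈ F'.reached [0, 1] :=
      ⟨S0, ⟨0, rfl, Or.inl rfl⟩,
        PFilter.Reaches.cons hstep1 (PFilter.Reaches.cons hstep2 (PFilter.Reaches.nil S6))⟩
    have hout6 : (1 : Fin 2) ∈ F'.out S6 := by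
      refine Set.mem_biInter ?_
      rintro v rfl
      rfl
    have hmem : (1 : Fin 2) ∈ F'.outputs [0, 1] :=
      Set.mem_biUnion hreach hout6
    have hbad := hsub hmem
    simp only [PFilter.outputs, Set.mem_iUnion, exists_prop] at hbad
    obtain ⟨u, ⟨v0, hv0, hr⟩, hout⟩ := hbad
    have hv0' : v0 = 0 := hv0
    subst hv0'
    rw [run_char] at hr
    have hu : u = 5 := by
      have : (some 5 : Option (Fin 7)) = some u := hr ▸ rfl
      exact (Option.some.inj this).symm
    subst hu
    simp [F, Fout] at hout
end

section
/- Let F and F' be deterministic p-filters (F possibly multi-outputting) such that F' output simulates F. Then for every state v' of F', the set K_{v'} of states of F corresponding to v' is group compatible. -/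
section Aux

variable {V Y C : Type}

lemma reaches_append_of {F : PFilter V Y C} {v m u : V} {t s : List Y}
    (h1 : F.Reaches v t m) (h2 : F.Reaches m s u) : F.Reaches v (t ++ s) u := by
  induction h1 with
  | nil => exact h2
  | cons hy _ ih => exact PFilter.Reaches.cons hy (ih h2)

lemma reaches_append_iff {F : PFilter V Y C} {v u : V} {t s : List Y}
    (h : F.Reaches v (t ++ s) u) : ∃ m, F.Reaches v t m ∧ F.Reaches m s u := by
  induction t generalizing v with
  | nil => exact ⟨v, PFilter.Reaches.nil v, h⟩
  | cons y t ih =>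
    cases h with
    | cons hy hrest =>
      obtain ⟨m, hm1, hm2⟩ := ih hrest
      exact ⟨m, PFilter.Reaches.cons hy hm1, hm2⟩

lemma det_unique {F : PFilter V Y C} (hdet : F.Deterministic) {v u1 u2 : V}
    {s : List Y} (h1 : F.Reaches v s u1) (h2 : F.Reaches v s u2) : u1 = u2 := by
  induction h1 generalizing u2 with
  | nil => cases h2; rfl
  | @cons v w u y s hy hr ih =>
    cases h2 with
    | @cons _ w2 _ _ _ hy2 hr2 =>
      have hww : w = w2 := by
        by_contra hne
        have := hdet.2 v w w2 hne
        exact absurd (Set.mem_inter hy hy2) (by simp [this])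
      subst hww
      exact ih hr2

end Aux

/-- Each correspondence set `K_{v'}` is group compatible. -/
theorem corrSet_groupCompatible {V V' Y C : Type} [Finite V] [Finite V']
    (F : PFilter V Y C) (F' : PFilter V' Y C)
    (hdet : F.Deterministic) (hdet' : F'.Deterministic)
    (hsim : F'.OutputSimulates F) (v' : V') :
    F.GroupCompatible (PFilter.corrSet F F' v') := by
  rintro s ⟨u0, hu0, w0, hw0⟩
  obtain ⟨t0, ⟨a0, ha0, hra0⟩, ⟨b0, hb0, hrb0⟩⟩ := hu0
  have hlang0 : t0 ++ s ∈ F.language := ⟨a0, ha0, w0, reaches_append_of hra0 hw0⟩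
  obtain ⟨⟨c, hc⟩, _⟩ := hsim _ hlang0
  simp only [PFilter.outputs, PFilter.reached, Set.mem_iUnion, Set.mem_setOf_eq,
    exists_prop] at hc
  obtain ⟨w', ⟨b, hb, hrb⟩, hcw⟩ := hc
  obtain ⟨m, hm1, hm2⟩ := reaches_append_iff hrb
  obtain ⟨i', hi'⟩ := hdet'.1
  rw [hi', Set.mem_singleton_iff] at hb hb0
  rw [hb] at hm1; rw [hb0] at hrb0
  have hmv : m = v' := det_unique hdet' hm1 hrb0
  rw [hmv] at hm2
  refine ⟨c, ?_⟩
  rw [Set.mem_iInter₂]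
  rintro w ⟨u, hu, hwreach⟩
  obtain ⟨t, ⟨a, ha, hra⟩, ⟨b1, hb1, hrb1⟩⟩ := hu
  have hwreach' : F.Reaches u s w := hwreach
  have hlang : t ++ s ∈ F.language := ⟨a, ha, w, reaches_append_of hra hwreach'⟩
  obtain ⟨-, hsub⟩ := hsim _ hlang
  have hc' : c ∈ F'.outputs (t ++ s) := by
    refine Set.mem_biUnion ?_ hcw
    exact ⟨b1, hb1, reaches_append_of hrb1 hm2⟩
  have hcF := hsub hc'
  simp only [PFilter.outputs, PFilter.reached, Set.mem_iUnion, Set.mem_setOf_eq,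
    exists_prop] at hcF
  obtain ⟨w2, ⟨a2, ha2, hra2⟩, hcw2⟩ := hcF
  obtain ⟨i, hi⟩ := hdet.1
  rw [hi, Set.mem_singleton_iff] at ha2 ha
  rw [ha2] at hra2; rw [ha] at hra
  have hw2 : w2 = w := det_unique hdet hra2 (reaches_append_of hra hwreach')
  exact hw2 ▸ hcw2
end
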